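/- Assume all corner concentration values of all cells are strictly positive, that α > max{u₁⁺, u₂⁺, 0} over all Gauss points of all interior edges, and that Δt/Δx + Δt/Δy ≤ (1/6)·min{Φ_m/α, B₁, B₂}, where Φ_m is the minimum of Φ over all mesh corners, B₁ is the minimum over all interior vertical-edge Gauss points (i+1/2, j, β) and both signs ± of Φ_{i+1/2,j±1/2}/(α − u₁⁺_{i+1/2,j,β}), and B₂ is the analogous minimum over interior horizontal-edge Gauss points of Φ_{i±1/2,j+1/2}/(α − u₂⁺_{i,j+1/2,β}). Then the convection part H^c_{ij} := r̄_{ij}/3 + λ₁·∑_{β=1,2} w_β(û₁c_{i−1/2,j,β} − û₁c_{i+1/2,j,β}) + λ₂·∑_{β=1,2} w_β(û₂c_{i,j−1/2,β} − û₂c_{i,j+1/2,β}) is strictly positive for every interior cell (2 ≤ i ≤ N_x−1, 2 ≤ j ≤ N_y−1). -/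
import Mathlib


noncomputable section

namespace DG2D

/-- Gauss constant `μ₁ = (3+√3)/6`. -/
def mu1 : ℝ := (3 + Real.sqrt 3) / 6

/-- Gauss constant `μ₂ = (3-√3)/6`. -/
def mu2 : ℝ := (3 - Real.sqrt 3) / 6

/-- Value at the Gauss point `β` of an edge, from the two endpoint (corner) values:
`β = 1` gives `μ₁·a + μ₂·b`, `β = 2` gives `μ₂·a + μ₁·b`. -/
def ga (β : Fin 2) (a b : ℝ) : ℝ := if β = 0 then mu1 * a + mu2 * b else mu2 * a + mu1 * b

/-- Cell average `r̄_{ij} = (1/4)·∑ cΦ` over the four corners of `K_{ij}`.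
`Φ i j` denotes the corner value `Φ_{i+1/2,j+1/2}`; `c00 i j`, `c10 i j`, `c01 i j`,
`c11 i j` denote the corner values of `c` in cell `K_{ij}` at the corners
`(i-1/2,j-1/2)`, `(i+1/2,j-1/2)`, `(i-1/2,j+1/2)`, `(i+1/2,j+1/2)` respectively. -/
def rbar (Φ c00 c10 c01 c11 : ℕ → ℕ → ℝ) (i j : ℕ) : ℝ :=
  (c00 i j * Φ (i - 1) (j - 1) + c10 i j * Φ i (j - 1)
    + c01 i j * Φ (i - 1) j + c11 i j * Φ i j) / 4

/-- Trace `c⁻` (from `K_{ij}`) at Gauss point `β` of the vertical edge `x_{i+1/2}`, row `j`. -/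
def cmV (c10 c11 : ℕ → ℕ → ℝ) (i j : ℕ) (β : Fin 2) : ℝ := ga β (c10 i j) (c11 i j)

/-- Trace `c⁺` (from `K_{i+1,j}`) at Gauss point `β` of the vertical edge `x_{i+1/2}`, row `j`. -/
def cpV (c00 c01 : ℕ → ℕ → ℝ) (i j : ℕ) (β : Fin 2) : ℝ := ga β (c00 (i + 1) j) (c01 (i + 1) j)

/-- Trace `c⁻` (from `K_{ij}`) at Gauss point `β` of the horizontal edge `y_{j+1/2}`, column `i`. -/
def cmH (c01 c11 : ℕ → ℕ → ℝ) (i j : ℕ) (β : Fin 2) : ℝ := ga β (c01 i j) (c11 i j)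

/-- Trace `c⁺` (from `K_{i,j+1}`) at Gauss point `β` of the horizontal edge `y_{j+1/2}`. -/
def cpH (c00 c10 : ℕ → ℕ → ℝ) (i j : ℕ) (β : Fin 2) : ℝ := ga β (c00 i (j + 1)) (c10 i (j + 1))

/-- Jump `[c] = c⁺ - c⁻` at a vertical-edge Gauss point. -/
def jumpV (c00 c10 c01 c11 : ℕ → ℕ → ℝ) (i j : ℕ) (β : Fin 2) : ℝ :=
  cpV c00 c01 i j β - cmV c10 c11 i j β

/-- Jump `[c] = c⁺ - c⁻` at a horizontal-edge Gauss point. -/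
def jumpH (c00 c10 c01 c11 : ℕ → ℕ → ℝ) (i j : ℕ) (β : Fin 2) : ℝ :=
  cpH c00 c10 i j β - cmH c01 c11 i j β

/-- Convective flux `û₁c = u₁⁺·c⁺ - α·[c]` at vertical-edge Gauss points. -/
def uc1 (u1 : ℕ → ℕ → Fin 2 → ℝ) (c00 c10 c01 c11 : ℕ → ℕ → ℝ) (α : ℝ)
    (i j : ℕ) (β : Fin 2) : ℝ :=
  u1 i j β * cpV c00 c01 i j β - α * (cpV c00 c01 i j β - cmV c10 c11 i j β)

/-- Convective flux `û₂c = u₂⁺·c⁺ - α·[c]` at horizontal-edge Gauss points. -/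
def uc2 (u2 : ℕ → ℕ → Fin 2 → ℝ) (c00 c10 c01 c11 : ℕ → ℕ → ℝ) (α : ℝ)
    (i j : ℕ) (β : Fin 2) : ℝ :=
  u2 i j β * cpH c00 c10 i j β - α * (cpH c00 c10 i j β - cmH c01 c11 i j β)

/-- Convection part `H^c_{ij}`. -/
def Hc (u1 u2 : ℕ → ℕ → Fin 2 → ℝ) (Φ c00 c10 c01 c11 : ℕ → ℕ → ℝ) (α Δx Δy Δt : ℝ)
    (i j : ℕ) : ℝ :=
  rbar Φ c00 c10 c01 c11 i j / 3
    + (Δt / Δx) * ∑ β : Fin 2, (1 / 2 : ℝ) *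
        (uc1 u1 c00 c10 c01 c11 α (i - 1) j β - uc1 u1 c00 c10 c01 c11 α i j β)
    + (Δt / Δy) * ∑ β : Fin 2, (1 / 2 : ℝ) *
        (uc2 u2 c00 c10 c01 c11 α i (j - 1) β - uc2 u2 c00 c10 c01 c11 α i j β)

/-- Derivative trace `(c_x)⁻` at a vertical-edge Gauss point:
`(c_x)⁻_{i+1/2,β} = (c⁻_{i+1/2,β} - c⁺_{i-1/2,β})/Δx`. -/
def cxmV (c00 c10 c01 c11 : ℕ → ℕ → ℝ) (Δx : ℝ) (i j : ℕ) (β : Fin 2) : ℝ :=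
  (cmV c10 c11 i j β - cpV c00 c01 (i - 1) j β) / Δx

/-- Derivative trace `(c_x)⁺` at a vertical-edge Gauss point:
`(c_x)⁺_{i+1/2,β} = (c⁻_{i+3/2,β} - c⁺_{i+1/2,β})/Δx`. -/
def cxpV (c00 c10 c01 c11 : ℕ → ℕ → ℝ) (Δx : ℝ) (i j : ℕ) (β : Fin 2) : ℝ :=
  (cmV c10 c11 (i + 1) j β - cpV c00 c01 i j β) / Δx

/-- Tangential derivative trace `(c_y)⁻` on a vertical edge:
`(√3/Δy)·(c⁻_{i+1/2,2} - c⁻_{i+1/2,1})` (the same for both Gauss points). -/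
def cymV (c10 c11 : ℕ → ℕ → ℝ) (Δy : ℝ) (i j : ℕ) : ℝ :=
  (Real.sqrt 3 / Δy) * (cmV c10 c11 i j 1 - cmV c10 c11 i j 0)

/-- Tangential derivative trace `(c_y)⁺` on a vertical edge. -/
def cypV (c00 c01 : ℕ → ℕ → ℝ) (Δy : ℝ) (i j : ℕ) : ℝ :=
  (Real.sqrt 3 / Δy) * (cpV c00 c01 i j 1 - cpV c00 c01 i j 0)

/-- Average `{D₁₁c_x + D₁₂c_y}` at a vertical-edge Gauss point. -/
def GxV (D11m D11p D12m D12p : ℕ → ℕ → Fin 2 → ℝ) (c00 c10 c01 c11 : ℕ → ℕ → ℝ)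
    (Δx Δy : ℝ) (i j : ℕ) (β : Fin 2) : ℝ :=
  (D11m i j β * cxmV c00 c10 c01 c11 Δx i j β + D12m i j β * cymV c10 c11 Δy i j
    + D11p i j β * cxpV c00 c10 c01 c11 Δx i j β + D12p i j β * cypV c00 c01 Δy i j) / 2

/-- x-diffusion part `H^d_x`. -/
def Hdx (D11m D11p D12m D12p : ℕ → ℕ → Fin 2 → ℝ) (Φ c00 c10 c01 c11 : ℕ → ℕ → ℝ)
    (αt Δx Δy Δt : ℝ) (i j : ℕ) : ℝ :=
  rbar Φ c00 c10 c01 c11 i j / 6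
    - (Δt / Δx) * ∑ β : Fin 2, (1 / 2 : ℝ) *
        ((GxV D11m D11p D12m D12p c00 c10 c01 c11 Δx Δy (i - 1) j β
            + (αt / Δy) * jumpV c00 c10 c01 c11 (i - 1) j β)
          - (GxV D11m D11p D12m D12p c00 c10 c01 c11 Δx Δy i j β
            + (αt / Δy) * jumpV c00 c10 c01 c11 i j β))

/-- Derivative trace `(c_y)⁻` at a horizontal-edge Gauss point. -/
def cymH (c00 c10 c01 c11 : ℕ → ℕ → ℝ) (Δy : ℝ) (i j : ℕ) (β : Fin 2) : ℝ :=
  (cmH c01 c11 i j β - cpH c00 c10 i (j - 1) β) / Δy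

/-- Derivative trace `(c_y)⁺` at a horizontal-edge Gauss point. -/
def cypH (c00 c10 c01 c11 : ℕ → ℕ → ℝ) (Δy : ℝ) (i j : ℕ) (β : Fin 2) : ℝ :=
  (cmH c01 c11 i (j + 1) β - cpH c00 c10 i j β) / Δy

/-- Tangential derivative trace `(c_x)⁻` on a horizontal edge. -/
def cxmH (c01 c11 : ℕ → ℕ → ℝ) (Δx : ℝ) (i j : ℕ) : ℝ :=
  (Real.sqrt 3 / Δx) * (cmH c01 c11 i j 1 - cmH c01 c11 i j 0)

/-- Tangential derivative trace `(c_x)⁺` on a horizontal edge. -/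
def cxpH (c00 c10 : ℕ → ℕ → ℝ) (Δx : ℝ) (i j : ℕ) : ℝ :=
  (Real.sqrt 3 / Δx) * (cpH c00 c10 i j 1 - cpH c00 c10 i j 0)

/-- Average `{D₂₁c_x + D₂₂c_y}` at a horizontal-edge Gauss point. -/
def GyH (D21m D21p D22m D22p : ℕ → ℕ → Fin 2 → ℝ) (c00 c10 c01 c11 : ℕ → ℕ → ℝ)
    (Δx Δy : ℝ) (i j : ℕ) (β : Fin 2) : ℝ :=
  (D21m i j β * cxmH c01 c11 Δx i j + D22m i j β * cymH c00 c10 c01 c11 Δy i j β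
    + D21p i j β * cxpH c00 c10 Δx i j + D22p i j β * cypH c00 c10 c01 c11 Δy i j β) / 2

/-- y-diffusion part `H^d_y`. -/
def Hdy (D21m D21p D22m D22p : ℕ → ℕ → Fin 2 → ℝ) (Φ c00 c10 c01 c11 : ℕ → ℕ → ℝ)
    (αt Δx Δy Δt : ℝ) (i j : ℕ) : ℝ :=
  rbar Φ c00 c10 c01 c11 i j / 6
    - (Δt / Δy) * ∑ β : Fin 2, (1 / 2 : ℝ) *
        ((GyH D21m D21p D22m D22p c00 c10 c01 c11 Δx Δy i (j - 1) β
            + (αt / Δx) * jumpH c00 c10 c01 c11 i (j - 1) β)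
          - (GyH D21m D21p D22m D22p c00 c10 c01 c11 Δx Δy i j β
            + (αt / Δx) * jumpH c00 c10 c01 c11 i j β))

/-- Value of the bilinear function `c` at the interior Gauss point `(β,γ)` of cell `K_{ij}`. -/
def cGP (c00 c10 c01 c11 : ℕ → ℕ → ℝ) (i j : ℕ) (β γ : Fin 2) : ℝ :=
  ga β (ga γ (c00 i j) (c01 i j)) (ga γ (c10 i j) (c11 i j))

/-- Value of the bilinear function `r = cΦ` at the interior Gauss point `(β,γ)` of `K_{ij}`. -/
def rGP (Φ c00 c10 c01 c11 : ℕ → ℕ → ℝ) (i j : ℕ) (β γ : Fin 2) : ℝ :=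
  ga β (ga γ (c00 i j * Φ (i - 1) (j - 1)) (c01 i j * Φ (i - 1) j))
    (ga γ (c10 i j * Φ i (j - 1)) (c11 i j * Φ i j))

/-- Value of the bilinear interpolant of `Φ` at the interior Gauss point `(β,γ)` of `K_{ij}`. -/
def phiGP (Φ : ℕ → ℕ → ℝ) (i j : ℕ) (β γ : Fin 2) : ℝ :=
  ga β (ga γ (Φ (i - 1) (j - 1)) (Φ (i - 1) j)) (ga γ (Φ i (j - 1)) (Φ i j))

/-- Source part `H^s_{ij}`. -/
def Hs (Φ c00 c10 c01 c11 : ℕ → ℕ → ℝ) (q ct P : ℕ → ℕ → Fin 2 → Fin 2 → ℝ)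
    (z1 Δt : ℝ) (i j : ℕ) : ℝ :=
  rbar Φ c00 c10 c01 c11 i j / 3
    + Δt * ∑ β : Fin 2, ∑ γ : Fin 2, (1 / 2 : ℝ) * (1 / 2 : ℝ) *
        (ct i j β γ * q i j β γ - z1 * rGP Φ c00 c10 c01 c11 i j β γ * P i j β γ)

/-- The Euler-forward cell-average update `r̄^{new}_{ij} = H^c + H^d_x + H^d_y + H^s`. -/
def rbarnew (u1 u2 D11m D11p D12m D12p D21m D21p D22m D22p : ℕ → ℕ → Fin 2 → ℝ)
    (Φ c00 c10 c01 c11 : ℕ → ℕ → ℝ) (q ct P : ℕ → ℕ → Fin 2 → Fin 2 → ℝ)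
    (α αt z1 Δx Δy Δt : ℝ) (i j : ℕ) : ℝ :=
  Hc u1 u2 Φ c00 c10 c01 c11 α Δx Δy Δt i j
    + Hdx D11m D11p D12m D12p Φ c00 c10 c01 c11 αt Δx Δy Δt i j
    + Hdy D21m D21p D22m D22p Φ c00 c10 c01 c11 αt Δx Δy Δt i j
    + Hs Φ c00 c10 c01 c11 q ct P z1 Δt i j


/-- Auxiliary: each corner's negative coefficient is dominated by its porosity. -/
lemma corner_bound (s φ A0 A1 B0 B1 l1 l2 m1 m2 : ℝ) (hs : 0 < s) (hls : l1 + l2 = s)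
    (hl1 : 0 ≤ l1) (hl2 : 0 ≤ l2) (hm1 : 0 ≤ m1) (hm2 : 0 ≤ m2) (hm : m1 + m2 = 1)
    (h0 : s * (6 * A0) ≤ φ) (h1 : s * (6 * A1) ≤ φ)
    (h2 : s * (6 * B0) ≤ φ) (h3 : s * (6 * B1) ≤ φ) :
    6 * (l1 * (m1 * A0 + m2 * A1) + l2 * (m1 * B0 + m2 * B1)) ≤ φ := by
  have h2' : m2 = 1 - m1 := by linarith
  have hl2' : l2 = s - l1 := by linarith
  subst h2' hl2'
  have key : s * (6 * (l1 * (m1 * A0 + (1-m1) * A1) + (s-l1) * (m1 * B0 + (1-m1) * B1)))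
      ≤ s * φ := by
    nlinarith [mul_le_mul_of_nonneg_left h0 (mul_nonneg hl1 hm1),
               mul_le_mul_of_nonneg_left h1 (mul_nonneg hl1 hm2),
               mul_le_mul_of_nonneg_left h2 (mul_nonneg hl2 hm1),
               mul_le_mul_of_nonneg_left h3 (mul_nonneg hl2 hm2)]
  exact le_of_mul_le_mul_left key hs

lemma mu2_pos : 0 < mu2 := by
  have h : Real.sqrt 3 < 3 := by
    nlinarith [Real.sq_sqrt (by norm_num : (0:ℝ) ≤ 3), Real.sqrt_nonneg 3]
  unfold mu2; linarith

lemma mu1_pos : 0 < mu1 := by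
  have := Real.sqrt_nonneg 3
  unfold mu1; linarith

lemma mu_sum : mu1 + mu2 = 1 := by unfold mu1 mu2; ring

/-- Lemma 3.5 (2D): positivity of the convection part `H^c_{ij}` for interior cells. -/
theorem convection_part_positive_2d
    (Nx Ny : ℕ) (hNx : 4 ≤ Nx) (hNy : 4 ≤ Ny) (Δx Δy Δt : ℝ)
    (hΔx : 0 < Δx) (hΔy : 0 < Δy) (hΔt : 0 < Δt)
    (Φ c00 c10 c01 c11 : ℕ → ℕ → ℝ) (u1 u2 : ℕ → ℕ → Fin 2 → ℝ) (α : ℝ)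
    (hΦ : ∀ i j, i ≤ Nx → j ≤ Ny → 0 < Φ i j)
    -- all corner concentration values of all cells strictly positive
    (hc : ∀ i j, 1 ≤ i → i ≤ Nx → 1 ≤ j → j ≤ Ny →
      0 < c00 i j ∧ 0 < c10 i j ∧ 0 < c01 i j ∧ 0 < c11 i j)
    -- α > max{u₁⁺, u₂⁺, 0} over all Gauss points of all interior edges
    (hα0 : 0 < α)
    (hα1 : ∀ i j, 1 ≤ i → i ≤ Nx - 1 → 1 ≤ j → j ≤ Ny → ∀ β : Fin 2, u1 i j β < α)
    (hα2 : ∀ i j, 1 ≤ i → i ≤ Nx → 1 ≤ j → j ≤ Ny - 1 → ∀ β : Fin 2, u2 i j β < α)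
    -- Δt/Δx + Δt/Δy ≤ (1/6)·Φ_m/α  (Φ_m the minimum of Φ over all mesh corners)
    (hCFL0 : ∀ i j, i ≤ Nx → j ≤ Ny → Δt / Δx + Δt / Δy ≤ Φ i j / (6 * α))
    -- Δt/Δx + Δt/Δy ≤ B₁/6
    (hCFL1 : ∀ i j, 1 ≤ i → i ≤ Nx - 1 → 1 ≤ j → j ≤ Ny → ∀ β : Fin 2,
      Δt / Δx + Δt / Δy ≤ Φ i (j - 1) / (6 * (α - u1 i j β)) ∧
      Δt / Δx + Δt / Δy ≤ Φ i j / (6 * (α - u1 i j β)))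
    -- Δt/Δx + Δt/Δy ≤ B₂/6
    (hCFL2 : ∀ i j, 1 ≤ i → i ≤ Nx → 1 ≤ j → j ≤ Ny - 1 → ∀ β : Fin 2,
      Δt / Δx + Δt / Δy ≤ Φ (i - 1) j / (6 * (α - u2 i j β)) ∧
      Δt / Δx + Δt / Δy ≤ Φ i j / (6 * (α - u2 i j β))) :
    ∀ i j, 2 ≤ i → i ≤ Nx - 1 → 2 ≤ j → j ≤ Ny - 1 →
      0 < Hc u1 u2 Φ c00 c10 c01 c11 α Δx Δy Δt i j := by
  intro i j hi2 hiN hj2 hjN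
  have hl1 : 0 < Δt / Δx := div_pos hΔt hΔx
  have hl2 : 0 < Δt / Δy := div_pos hΔt hΔy
  have hs : 0 < Δt / Δx + Δt / Δy := by linarith
  -- concentration positivity in the five relevant cells
  obtain ⟨ha, hb, hcc, hd⟩ := hc i j (by omega) (by omega) (by omega) (by omega)
  obtain ⟨-, hbL, -, hdL⟩ := hc (i-1) j (by omega) (by omega) (by omega) (by omega)
  obtain ⟨haR, -, hcR, -⟩ := hc (i+1) j (by omega) (by omega) (by omega) (by omega)
  obtain ⟨-, -, hcD, hdD⟩ := hc i (j-1) (by omega) (by omega) (by omega) (by omega)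
  obtain ⟨haU, hbU, -, -⟩ := hc i (j+1) (by omega) (by omega) (by omega) (by omega)
  -- velocity gaps
  have hA0 : 0 < α - u1 (i-1) j 0 := sub_pos.2 (hα1 (i-1) j (by omega) (by omega) (by omega) (by omega) 0)
  have hA1 : 0 < α - u1 (i-1) j 1 := sub_pos.2 (hα1 (i-1) j (by omega) (by omega) (by omega) (by omega) 1)
  have hAi0 : 0 < α - u1 i j 0 := sub_pos.2 (hα1 i j (by omega) (by omega) (by omega) (by omega) 0)
  have hAi1 : 0 < α - u1 i j 1 := sub_pos.2 (hα1 i j (by omega) (by omega) (by omega) (by omega) 1)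
  have hB0 : 0 < α - u2 i (j-1) 0 := sub_pos.2 (hα2 i (j-1) (by omega) (by omega) (by omega) (by omega) 0)
  have hB1 : 0 < α - u2 i (j-1) 1 := sub_pos.2 (hα2 i (j-1) (by omega) (by omega) (by omega) (by omega) 1)
  have hBj0 : 0 < α - u2 i j 0 := sub_pos.2 (hα2 i j (by omega) (by omega) (by omega) (by omega) 0)
  have hBj1 : 0 < α - u2 i j 1 := sub_pos.2 (hα2 i j (by omega) (by omega) (by omega) (by omega) 1)
  -- CFL conversions
  have e1 := hCFL1 (i-1) j (by omega) (by omega) (by omega) (by omega)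
  have e2 := hCFL2 i (j-1) (by omega) (by omega) (by omega) (by omega)
  have him : i - 1 + 1 = i := by omega
  have hjm : j - 1 + 1 = j := by omega
  have k00 : (Δt/Δx + Δt/Δy) * (6 * (α - u1 (i-1) j 0)) ≤ Φ (i-1) (j-1) :=
    (le_div_iff₀ (by linarith)).mp ((e1 0).1)
  have k10 : (Δt/Δx + Δt/Δy) * (6 * (α - u1 (i-1) j 1)) ≤ Φ (i-1) (j-1) :=
    (le_div_iff₀ (by linarith)).mp ((e1 1).1)
  have k01 : (Δt/Δx + Δt/Δy) * (6 * (α - u1 (i-1) j 0)) ≤ Φ (i-1) j :=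
    (le_div_iff₀ (by linarith)).mp ((e1 0).2)
  have k11 : (Δt/Δx + Δt/Δy) * (6 * (α - u1 (i-1) j 1)) ≤ Φ (i-1) j :=
    (le_div_iff₀ (by linarith)).mp ((e1 1).2)
  have m00 : (Δt/Δx + Δt/Δy) * (6 * (α - u2 i (j-1) 0)) ≤ Φ (i-1) (j-1) := by
    have := (le_div_iff₀ (by linarith : (0:ℝ) < 6 * (α - u2 i (j-1) 0))).mp ((e2 0).1)
    simpa using this
  have m10 : (Δt/Δx + Δt/Δy) * (6 * (α - u2 i (j-1) 1)) ≤ Φ (i-1) (j-1) := by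
    have := (le_div_iff₀ (by linarith : (0:ℝ) < 6 * (α - u2 i (j-1) 1))).mp ((e2 1).1)
    simpa using this
  have m01 : (Δt/Δx + Δt/Δy) * (6 * (α - u2 i (j-1) 0)) ≤ Φ i (j-1) :=
    (le_div_iff₀ (by linarith)).mp ((e2 0).2)
  have m11 : (Δt/Δx + Δt/Δy) * (6 * (α - u2 i (j-1) 1)) ≤ Φ i (j-1) :=
    (le_div_iff₀ (by linarith)).mp ((e2 1).2)
  have g10 : (Δt/Δx + Δt/Δy) * (6 * α) ≤ Φ i (j-1) :=
    (le_div_iff₀ (by linarith)).mp (hCFL0 i (j-1) (by omega) (by omega))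
  have g01 : (Δt/Δx + Δt/Δy) * (6 * α) ≤ Φ (i-1) j :=
    (le_div_iff₀ (by linarith)).mp (hCFL0 (i-1) j (by omega) (by omega))
  have g11 : (Δt/Δx + Δt/Δy) * (6 * α) ≤ Φ i j :=
    (le_div_iff₀ (by linarith)).mp (hCFL0 i j (by omega) (by omega))
  -- per-corner coefficient bounds
  have cornA : 6 * ((Δt/Δx) * (mu1 * (α - u1 (i-1) j 0) + mu2 * (α - u1 (i-1) j 1))
      + (Δt/Δy) * (mu1 * (α - u2 i (j-1) 0) + mu2 * (α - u2 i (j-1) 1))) ≤ Φ (i-1) (j-1) :=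
    corner_bound _ _ _ _ _ _ _ _ _ _ hs rfl hl1.le hl2.le mu1_pos.le mu2_pos.le mu_sum
      k00 k10 m00 m10
  have cornB : 6 * ((Δt/Δx) * (mu1 * α + mu2 * α)
      + (Δt/Δy) * (mu1 * (α - u2 i (j-1) 1) + mu2 * (α - u2 i (j-1) 0))) ≤ Φ i (j-1) :=
    corner_bound _ _ _ _ _ _ _ _ _ _ hs rfl hl1.le hl2.le mu1_pos.le mu2_pos.le mu_sum
      g10 g10 m11 m01
  have cornC : 6 * ((Δt/Δx) * (mu1 * (α - u1 (i-1) j 1) + mu2 * (α - u1 (i-1) j 0))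
      + (Δt/Δy) * (mu1 * α + mu2 * α)) ≤ Φ (i-1) j :=
    corner_bound _ _ _ _ _ _ _ _ _ _ hs rfl hl1.le hl2.le mu1_pos.le mu2_pos.le mu_sum
      k11 k01 g01 g01
  have cornD : 6 * ((Δt/Δx) * (mu1 * α + mu2 * α)
      + (Δt/Δy) * (mu1 * α + mu2 * α)) ≤ Φ i j :=
    corner_bound _ _ _ _ _ _ _ _ _ _ hs rfl hl1.le hl2.le mu1_pos.le mu2_pos.le mu_sum
      g11 g11 g11 g11
  -- explicit decomposition of Hc into a positive part and a controlled part
  have hexp : Hc u1 u2 Φ c00 c10 c01 c11 α Δx Δy Δt i j =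
      ((Δt/Δx) * (1/2) * (α * (mu1 * c10 (i-1) j + mu2 * c11 (i-1) j)
          + (α - u1 i j 0) * (mu1 * c00 (i+1) j + mu2 * c01 (i+1) j))
        + (Δt/Δx) * (1/2) * (α * (mu2 * c10 (i-1) j + mu1 * c11 (i-1) j)
          + (α - u1 i j 1) * (mu2 * c00 (i+1) j + mu1 * c01 (i+1) j))
        + (Δt/Δy) * (1/2) * (α * (mu1 * c01 i (j-1) + mu2 * c11 i (j-1))
          + (α - u2 i j 0) * (mu1 * c00 i (j+1) + mu2 * c10 i (j+1)))
        + (Δt/Δy) * (1/2) * (α * (mu2 * c01 i (j-1) + mu1 * c11 i (j-1))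
          + (α - u2 i j 1) * (mu2 * c00 i (j+1) + mu1 * c10 i (j+1))))
      + ((c00 i j * Φ (i-1) (j-1) + c10 i j * Φ i (j-1)
          + c01 i j * Φ (i-1) j + c11 i j * Φ i j) / 12
        - ((Δt/Δx) * (1/2) * ((α - u1 (i-1) j 0) * (mu1 * c00 i j + mu2 * c01 i j)
            + α * (mu1 * c10 i j + mu2 * c11 i j))
          + (Δt/Δx) * (1/2) * ((α - u1 (i-1) j 1) * (mu2 * c00 i j + mu1 * c01 i j)
            + α * (mu2 * c10 i j + mu1 * c11 i j))
          + (Δt/Δy) * (1/2) * ((α - u2 i (j-1) 0) * (mu1 * c00 i j + mu2 * c10 i j)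
            + α * (mu1 * c01 i j + mu2 * c11 i j))
          + (Δt/Δy) * (1/2) * ((α - u2 i (j-1) 1) * (mu2 * c00 i j + mu1 * c10 i j)
            + α * (mu2 * c01 i j + mu1 * c11 i j)))) := by
    simp only [Hc, rbar, uc1, uc2, cpV, cmV, cpH, cmH, ga, Fin.sum_univ_two, him, hjm]
    norm_num
    ring
  have gp : ∀ x y : ℝ, 0 < x → 0 < y → 0 < mu1 * x + mu2 * y ∧ 0 < mu2 * x + mu1 * y :=
    fun x y hx hy => ⟨add_pos (mul_pos mu1_pos hx) (mul_pos mu2_pos hy),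
      add_pos (mul_pos mu2_pos hx) (mul_pos mu1_pos hy)⟩
  have gL := gp _ _ hbL hdL
  have gR := gp _ _ haR hcR
  have gD := gp _ _ hcD hdD
  have gU := gp _ _ haU hbU
  have hPos : 0 < (Δt/Δx) * (1/2) * (α * (mu1 * c10 (i-1) j + mu2 * c11 (i-1) j)
      + (α - u1 i j 0) * (mu1 * c00 (i+1) j + mu2 * c01 (i+1) j))
    + (Δt/Δx) * (1/2) * (α * (mu2 * c10 (i-1) j + mu1 * c11 (i-1) j)
      + (α - u1 i j 1) * (mu2 * c00 (i+1) j + mu1 * c01 (i+1) j))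
    + (Δt/Δy) * (1/2) * (α * (mu1 * c01 i (j-1) + mu2 * c11 i (j-1))
      + (α - u2 i j 0) * (mu1 * c00 i (j+1) + mu2 * c10 i (j+1)))
    + (Δt/Δy) * (1/2) * (α * (mu2 * c01 i (j-1) + mu1 * c11 i (j-1))
      + (α - u2 i j 1) * (mu2 * c00 i (j+1) + mu1 * c10 i (j+1))) := by
    have t1 := mul_pos (mul_pos hl1 (by norm_num : (0:ℝ) < 1/2))
      (add_pos (mul_pos hα0 gL.1) (mul_pos hAi0 gR.1))
    have t2 := mul_pos (mul_pos hl1 (by norm_num : (0:ℝ) < 1/2))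
      (add_pos (mul_pos hα0 gL.2) (mul_pos hAi1 gR.2))
    have t3 := mul_pos (mul_pos hl2 (by norm_num : (0:ℝ) < 1/2))
      (add_pos (mul_pos hα0 gD.1) (mul_pos hBj0 gU.1))
    have t4 := mul_pos (mul_pos hl2 (by norm_num : (0:ℝ) < 1/2))
      (add_pos (mul_pos hα0 gD.2) (mul_pos hBj1 gU.2))
    linarith
  have hRest : 0 ≤ (c00 i j * Φ (i-1) (j-1) + c10 i j * Φ i (j-1)
      + c01 i j * Φ (i-1) j + c11 i j * Φ i j) / 12
    - ((Δt/Δx) * (1/2) * ((α - u1 (i-1) j 0) * (mu1 * c00 i j + mu2 * c01 i j)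
        + α * (mu1 * c10 i j + mu2 * c11 i j))
      + (Δt/Δx) * (1/2) * ((α - u1 (i-1) j 1) * (mu2 * c00 i j + mu1 * c01 i j)
        + α * (mu2 * c10 i j + mu1 * c11 i j))
      + (Δt/Δy) * (1/2) * ((α - u2 i (j-1) 0) * (mu1 * c00 i j + mu2 * c10 i j)
        + α * (mu1 * c01 i j + mu2 * c11 i j))
      + (Δt/Δy) * (1/2) * ((α - u2 i (j-1) 1) * (mu2 * c00 i j + mu1 * c10 i j)
        + α * (mu2 * c01 i j + mu1 * c11 i j))) := by
    have pA := mul_nonneg (sub_nonneg.2 cornA) ha.le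
    have pB := mul_nonneg (sub_nonneg.2 cornB) hb.le
    have pC := mul_nonneg (sub_nonneg.2 cornC) hcc.le
    have pD := mul_nonneg (sub_nonneg.2 cornD) hd.le
    have hsum : (c00 i j * Φ (i-1) (j-1) + c10 i j * Φ i (j-1)
        + c01 i j * Φ (i-1) j + c11 i j * Φ i j) / 12
      - ((Δt/Δx) * (1/2) * ((α - u1 (i-1) j 0) * (mu1 * c00 i j + mu2 * c01 i j)
          + α * (mu1 * c10 i j + mu2 * c11 i j))
        + (Δt/Δx) * (1/2) * ((α - u1 (i-1) j 1) * (mu2 * c00 i j + mu1 * c01 i j)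
          + α * (mu2 * c10 i j + mu1 * c11 i j))
        + (Δt/Δy) * (1/2) * ((α - u2 i (j-1) 0) * (mu1 * c00 i j + mu2 * c10 i j)
          + α * (mu1 * c01 i j + mu2 * c11 i j))
        + (Δt/Δy) * (1/2) * ((α - u2 i (j-1) 1) * (mu2 * c00 i j + mu1 * c10 i j)
          + α * (mu2 * c01 i j + mu1 * c11 i j))) =
      ((Φ (i-1) (j-1) - 6 * ((Δt/Δx) * (mu1 * (α - u1 (i-1) j 0) + mu2 * (α - u1 (i-1) j 1))
          + (Δt/Δy) * (mu1 * (α - u2 i (j-1) 0) + mu2 * (α - u2 i (j-1) 1)))) * c00 i j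
        + (Φ i (j-1) - 6 * ((Δt/Δx) * (mu1 * α + mu2 * α)
          + (Δt/Δy) * (mu1 * (α - u2 i (j-1) 1) + mu2 * (α - u2 i (j-1) 0)))) * c10 i j
        + (Φ (i-1) j - 6 * ((Δt/Δx) * (mu1 * (α - u1 (i-1) j 1) + mu2 * (α - u1 (i-1) j 0))
          + (Δt/Δy) * (mu1 * α + mu2 * α))) * c01 i j
        + (Φ i j - 6 * ((Δt/Δx) * (mu1 * α + mu2 * α)
          + (Δt/Δy) * (mu1 * α + mu2 * α))) * c11 i j) / 12 := by ring
    rw [hsum]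
    have h12 : (0:ℝ) ≤ 12 := by norm_num
    exact div_nonneg (by linarith) h12
  rw [hexp]
  exact add_pos_of_pos_of_nonneg hPos hRest


end DG2D
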